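/- Let $1 \leq m < n$ and $k \geq 1$ be integers, $0 \leq \alpha \leq 1$, $A \subseteq \mathbb{R}^m$, $a \in \mathbb{R}^m$ and $f : A \to \mathbb{R}^{n-m}$. Then $f$ is approximately differentiable of order $(k,\alpha)$ at $a$ if and only if there exists a function $g : \mathbb{R}^m \to \mathbb{R}^{n-m}$ pointwise differentiable of order $(k,\alpha)$ at $a$ such that $f(a) = g(a)$ if $a \in A$ and the set $\{x : g(x) = f(x)\}$ has Lebesgue density $1$ at $a$ (i.e. the complement of $\{x \in A : g(x) = f(x)\}$ has $m$-dimensional Lebesgue density $0$ at $a$). -/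

import Mathlib

open MeasureTheory Metric Filter Set
open scoped ENNReal Topology NNReal

/-- The set `S` has `m`-dimensional Lebesgue density `0` at `a`. -/
def DensityZero {m : ℕ} (S : Set (EuclideanSpace ℝ (Fin m)))
    (a : EuclideanSpace ℝ (Fin m)) : Prop :=
  Filter.Tendsto (fun r : ℝ =>
    volume (S ∩ Metric.closedBall a r) / volume (Metric.closedBall a r))
    (𝓝[>] (0 : ℝ)) (𝓝 0)

/-- `P` is a polynomial function of degree at most `k`. -/
def PolyDegLE {E F : Type*} [NormedAddCommGroup E] [NormedSpace ℝ E]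
    [NormedAddCommGroup F] [NormedSpace ℝ F] (k : ℕ) (P : E → F) : Prop :=
  ∃ φ : ∀ i : ℕ, ContinuousMultilinearMap ℝ (fun _ : Fin i => E) F,
    ∀ x, P x = ∑ i ∈ Finset.range (k + 1), φ i (fun _ => x)

/-- `f : A → F` is approximately differentiable of order `(k, α)` at `a`. -/
def ApproxDiffAt {m : ℕ} {F : Type*} [NormedAddCommGroup F] [NormedSpace ℝ F]
    (k : ℕ) (α : ℝ) (A : Set (EuclideanSpace ℝ (Fin m)))
    (f : EuclideanSpace ℝ (Fin m) → F) (a : EuclideanSpace ℝ (Fin m)) : Prop :=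
  DensityZero Aᶜ a ∧
  ∃ P : EuclideanSpace ℝ (Fin m) → F, PolyDegLE k P ∧ (a ∈ A → P a = f a) ∧
    (α = 0 → ∀ ε : ℝ, 0 < ε →
      DensityZero {x | x ∈ A ∧ ε * ‖x - a‖ ^ (k : ℝ) < ‖f x - P x‖} a) ∧
    (α ≠ 0 → ∃ lam : ℝ, 0 ≤ lam ∧
      DensityZero {x | x ∈ A ∧ lam * ‖x - a‖ ^ ((k : ℝ) + α) < ‖f x - P x‖} a)

/-- `g` is pointwise differentiable of order `(k, α)` at `a`. -/
def PtDiffAt {m : ℕ} {F : Type*} [NormedAddCommGroup F] [NormedSpace ℝ F]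
    (k : ℕ) (α : ℝ) (g : EuclideanSpace ℝ (Fin m) → F)
    (a : EuclideanSpace ℝ (Fin m)) : Prop :=
  ∃ P : EuclideanSpace ℝ (Fin m) → F, PolyDegLE k P ∧ g a = P a ∧
    (α = 0 → ∀ ε : ℝ, 0 < ε → ∀ᶠ x in 𝓝 a, ‖g x - P x‖ ≤ ε * ‖x - a‖ ^ (k : ℝ)) ∧
    (α ≠ 0 → ∃ C : ℝ, ∀ᶠ x in 𝓝 a, ‖g x - P x‖ ≤ C * ‖x - a‖ ^ ((k : ℝ) + α))

lemma DensityZero.mono_eventually {m : ℕ} {S T : Set (EuclideanSpace ℝ (Fin m))}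
    {a : EuclideanSpace ℝ (Fin m)} (hT : DensityZero T a)
    (h : ∀ᶠ x in 𝓝 a, x ∈ S → x ∈ T) : DensityZero S a := by
  obtain ⟨ε, hε, hball⟩ := Metric.eventually_nhds_iff_ball.mp h
  refine tendsto_of_tendsto_of_tendsto_of_le_of_le' tendsto_const_nhds hT
    (Eventually.of_forall fun r => zero_le) ?_
  filter_upwards [Ioo_mem_nhdsGT_of_mem ⟨le_refl (0:ℝ), hε⟩] with r hr
  refine ENNReal.div_le_div_right (measure_mono ?_) _
  rintro x ⟨hxS, hxB⟩
  exact ⟨hball x (lt_of_le_of_lt (mem_closedBall.mp hxB) hr.2) hxS, hxB⟩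

lemma DensityZero.union {m : ℕ} {S T : Set (EuclideanSpace ℝ (Fin m))}
    {a : EuclideanSpace ℝ (Fin m)} (hS : DensityZero S a) (hT : DensityZero T a) :
    DensityZero (S ∪ T) a := by
  have : Tendsto (fun r : ℝ =>
      volume (S ∩ closedBall a r) / volume (closedBall a r)
      + volume (T ∩ closedBall a r) / volume (closedBall a r)) (𝓝[>] 0) (𝓝 0) := by
    simpa using hS.add hT
  refine tendsto_of_tendsto_of_tendsto_of_le_of_le' tendsto_const_nhds this
    (Eventually.of_forall fun r => zero_le) (Eventually.of_forall fun r => ?_)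
  rw [← ENNReal.add_div]
  refine ENNReal.div_le_div_right ?_ _
  rw [union_inter_distrib_right]
  exact measure_union_le _ _

lemma tsum_split (f : ℕ → ℝ≥0∞) (J : ℕ) :
    ∑' j, f j = ∑ j ∈ Finset.range J, f j + ∑' j, f (j + J) := by
  induction J with
  | zero => simp
  | succ J ih =>
    rw [ih, Finset.sum_range_succ]
    have h1 : ∑' j, f (j + J) = f (0 + J) + ∑' j, f (j + 1 + J) :=
      tsum_eq_zero_add' ENNReal.summable
    have h2 : ∀ j : ℕ, f (j + 1 + J) = f (j + (J + 1)) := fun j => by ring_nf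
    rw [h1, tsum_congr h2, Nat.zero_add, ← add_assoc]

lemma densityZero_iUnion_closedBall {m : ℕ} {a : EuclideanSpace ℝ (Fin m)}
    (S : ℕ → Set (EuclideanSpace ℝ (Fin m))) (hS : ∀ j, DensityZero (S j) a) :
    ∃ r : ℕ → ℝ, (∀ j, 0 < r j) ∧
      DensityZero (⋃ j, S j ∩ closedBall a (r j)) a := by
  have key : ∀ j : ℕ, ∃ δ : ℝ, 0 < δ ∧ ∀ s : ℝ, 0 < s → s ≤ δ →
      volume (S j ∩ closedBall a s) ≤ (2⁻¹ : ℝ≥0∞) ^ (j + 1) * volume (closedBall a s) := by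
    intro j
    have hpos : (0 : ℝ≥0∞) < (2⁻¹ : ℝ≥0∞) ^ (j + 1) :=
      ENNReal.pow_pos (ENNReal.inv_pos.mpr (by norm_num)) _
    have hev := (hS j).eventually_lt_const hpos
    obtain ⟨u, hu, hsub⟩ := mem_nhdsGT_iff_exists_Ioc_subset.mp hev
    refine ⟨u, hu, fun s hs hsu => ?_⟩
    have h1 : volume (S j ∩ closedBall a s) / volume (closedBall a s)
        < (2⁻¹ : ℝ≥0∞) ^ (j + 1) := hsub ⟨hs, hsu⟩
    have hV0 : volume (closedBall a s) ≠ 0 := (measure_closedBall_pos volume a hs).ne'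
    have hVt : volume (closedBall a s) ≠ ⊤ := measure_closedBall_lt_top.ne
    exact le_of_lt ((ENNReal.div_lt_iff (Or.inl hV0) (Or.inl hVt)).mp h1)
  choose r hr hrS using key
  refine ⟨r, hr, ?_⟩
  rw [DensityZero, ENNReal.tendsto_nhds_zero]
  intro ε hε
  -- choose J with (2⁻¹)^J ≤ ε/2
  have hhalf : (0 : ℝ≥0∞) < ε / 2 := ENNReal.half_pos hε.ne'
  obtain ⟨J, hJ⟩ := ((ENNReal.tendsto_pow_atTop_nhds_zero_of_lt_one
    (by norm_num : (2⁻¹ : ℝ≥0∞) < 1)).eventually_lt_const hhalf).exists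
  -- head terms tend to 0
  have hterm : ∀ j : ℕ, Tendsto (fun ρ : ℝ =>
      volume (S j ∩ closedBall a (r j) ∩ closedBall a ρ) / volume (closedBall a ρ))
      (𝓝[>] (0:ℝ)) (𝓝 0) := by
    intro j
    refine tendsto_of_tendsto_of_tendsto_of_le_of_le' tendsto_const_nhds (hS j)
      (Eventually.of_forall fun ρ => zero_le) (Eventually.of_forall fun ρ => ?_)
    refine ENNReal.div_le_div_right (measure_mono ?_) _
    rintro x ⟨⟨h1, h2⟩, h3⟩
    exact ⟨h1, h3⟩
  have hhead : Tendsto (fun ρ : ℝ => ∑ j ∈ Finset.range J,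
      volume (S j ∩ closedBall a (r j) ∩ closedBall a ρ) / volume (closedBall a ρ))
      (𝓝[>] (0:ℝ)) (𝓝 0) := by
    have h := tendsto_finset_sum (Finset.range J) (fun j _ => hterm j)
    rw [Finset.sum_const_zero] at h
    exact h
  filter_upwards [hhead.eventually_le_const hhalf, self_mem_nhdsWithin] with ρ hρhead hρpos
  have hρ : (0:ℝ) < ρ := hρpos
  set V := volume (closedBall a ρ) with hV
  have hV0 : V ≠ 0 := (measure_closedBall_pos volume a hρ).ne'
  have hVt : V ≠ ⊤ := measure_closedBall_lt_top.ne
  set A : ℕ → Set (EuclideanSpace ℝ (Fin m)) :=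
    fun j => S j ∩ closedBall a (r j) ∩ closedBall a ρ with hA
  have hsum : volume ((⋃ j, S j ∩ closedBall a (r j)) ∩ closedBall a ρ)
      ≤ ∑' j, volume (A j) := by
    rw [iUnion_inter]
    exact measure_iUnion_le _
  have hsplit : ∑' j, volume (A j)
      = ∑ j ∈ Finset.range J, volume (A j) + ∑' j, volume (A (j + J)) :=
    tsum_split (fun j => volume (A j)) J
  -- tail bound
  have htail : ∑' j, volume (A (j + J)) ≤ ε / 2 * V := by
    have hterm2 : ∀ j : ℕ, volume (A (j + J)) ≤ (2⁻¹ : ℝ≥0∞) ^ (j + J + 1) * V := by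
      intro j
      have hmin : (0:ℝ) < min (r (j + J)) ρ := lt_min (hr _) hρ
      calc volume (A (j + J)) ≤ volume (S (j + J) ∩ closedBall a (min (r (j + J)) ρ)) := by
            refine measure_mono ?_
            rintro x ⟨⟨h1, h2⟩, h3⟩
            exact ⟨h1, mem_closedBall.mpr (le_min (mem_closedBall.mp h2) (mem_closedBall.mp h3))⟩
        _ ≤ (2⁻¹ : ℝ≥0∞) ^ (j + J + 1) * volume (closedBall a (min (r (j + J)) ρ)) :=
            hrS _ _ hmin (min_le_left _ _)
        _ ≤ (2⁻¹ : ℝ≥0∞) ^ (j + J + 1) * V :=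
            mul_le_mul_right (measure_mono (closedBall_subset_closedBall (min_le_right _ _))) _
    calc ∑' j, volume (A (j + J)) ≤ ∑' j, (2⁻¹ : ℝ≥0∞) ^ (j + J + 1) * V :=
          ENNReal.tsum_le_tsum hterm2
      _ = (∑' j, (2⁻¹ : ℝ≥0∞) ^ (j + J + 1)) * V := ENNReal.tsum_mul_right
      _ = (2⁻¹ : ℝ≥0∞) ^ J * V := by
          congr 1
          have : ∀ j : ℕ, (2⁻¹ : ℝ≥0∞) ^ (j + J + 1) = (2⁻¹ : ℝ≥0∞) ^ (J + 1) * (2⁻¹) ^ j := by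
            intro j; rw [← pow_add]; ring_nf
          rw [tsum_congr this, ENNReal.tsum_mul_left, ENNReal.tsum_geometric]
          have h2 : (1 - 2⁻¹ : ℝ≥0∞)⁻¹ = 2 := by
            rw [(by norm_num : (1 - 2⁻¹ : ℝ≥0∞) = 2⁻¹), inv_inv]
          rw [h2, pow_succ, mul_assoc, ENNReal.inv_mul_cancel (by norm_num) (by norm_num), mul_one]
      _ ≤ ε / 2 * V := mul_le_mul_left hJ.le _
  calc volume ((⋃ j, S j ∩ closedBall a (r j)) ∩ closedBall a ρ) / V
      ≤ (∑ j ∈ Finset.range J, volume (A j) + ε / 2 * V) / V := by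
        refine ENNReal.div_le_div_right ?_ _
        exact hsum.trans (hsplit ▸ add_le_add le_rfl htail)
    _ = (∑ j ∈ Finset.range J, volume (A j)) / V + (ε / 2 * V) / V := ENNReal.add_div
    _ ≤ ε / 2 + ε / 2 := by
        refine add_le_add ?_ ?_
        · rw [div_eq_mul_inv, Finset.sum_mul]
          simpa [div_eq_mul_inv] using hρhead
        · rw [mul_div_assoc, ENNReal.div_self hV0 hVt, mul_one]
    _ = ε := ENNReal.add_halves ε

theorem stmt1 {m n k : ℕ} (hm : 1 ≤ m) (hmn : m < n) (hk : 1 ≤ k)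
    (α : ℝ) (hα0 : 0 ≤ α) (hα1 : α ≤ 1)
    (A : Set (EuclideanSpace ℝ (Fin m))) (a : EuclideanSpace ℝ (Fin m))
    (f : EuclideanSpace ℝ (Fin m) → EuclideanSpace ℝ (Fin (n - m))) :
    ApproxDiffAt k α A f a ↔
      ∃ g : EuclideanSpace ℝ (Fin m) → EuclideanSpace ℝ (Fin (n - m)),
        PtDiffAt k α g a ∧ (a ∈ A → f a = g a) ∧
        DensityZero {x | x ∈ A ∧ g x = f x}ᶜ a := by
  classical
  constructor
  · rintro ⟨hA, P, hP, hPa, h0, h1⟩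
    by_cases hα : α = 0
    · -- α = 0 case
      set S : ℕ → Set (EuclideanSpace ℝ (Fin m)) := fun j =>
        {x | x ∈ A ∧ (1 / ((j : ℝ) + 1)) * ‖x - a‖ ^ (k : ℝ) < ‖f x - P x‖} with hSdef
      have hSd : ∀ j, DensityZero (S j) a := fun j => h0 hα _ (by positivity)
      obtain ⟨r, hrpos, hrd⟩ := densityZero_iUnion_closedBall S hSd
      set G : Set (EuclideanSpace ℝ (Fin m)) :=
        {x | x ∈ A ∧ ∀ j : ℕ, ‖x - a‖ ≤ r j →
          ‖f x - P x‖ ≤ (1 / ((j : ℝ) + 1)) * ‖x - a‖ ^ (k : ℝ)} with hGdef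
      have haG : a ∈ A → a ∈ G := by
        intro ha
        refine ⟨ha, fun j _ => ?_⟩
        rw [hPa ha, sub_self, sub_self, norm_zero, norm_zero,
          Real.zero_rpow (by exact_mod_cast Nat.one_le_iff_ne_zero.mp hk), mul_zero]
      refine ⟨fun x => if x ∈ G then f x else P x, ⟨P, hP, ?_, ?_, ?_⟩, ?_, ?_⟩
      · show (if a ∈ G then f a else P a) = P a
        by_cases ha : a ∈ A
        · rw [if_pos (haG ha), hPa ha]
        · rw [if_neg (fun hG => ha hG.1)]
      · intro _ ε hε
        obtain ⟨j, hj⟩ := exists_nat_one_div_lt hε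
        filter_upwards [Metric.closedBall_mem_nhds a (hrpos j)] with x hx
        have hxr : ‖x - a‖ ≤ r j := by
          rw [← dist_eq_norm]; exact mem_closedBall.mp hx
        show ‖(if x ∈ G then f x else P x) - P x‖ ≤ _
        by_cases hxG : x ∈ G
        · rw [if_pos hxG]
          exact (hxG.2 j hxr).trans (mul_le_mul_of_nonneg_right hj.le
            (Real.rpow_nonneg (norm_nonneg _) _))
        · rw [if_neg hxG, sub_self, norm_zero]
          exact mul_nonneg hε.le (Real.rpow_nonneg (norm_nonneg _) _)
      · intro hα'; exact absurd hα hα'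
      · intro ha; exact (if_pos (haG ha)).symm
      · refine (hA.union hrd).mono_eventually (Eventually.of_forall fun x hx => ?_)
        by_cases hxA : x ∈ A
        · right
          have hxG : x ∉ G := fun hG => hx ⟨hxA, if_pos hG⟩
          rw [hGdef] at hxG
          simp only [mem_setOf_eq, not_and, not_forall, not_le] at hxG
          obtain ⟨j, hj1, hj2⟩ := hxG hxA
          exact mem_iUnion.mpr ⟨j, ⟨hxA, hj2⟩, mem_closedBall.mpr (by
            rw [dist_eq_norm]; exact hj1)⟩
        · exact Or.inl hxA
    · -- α ≠ 0 case
      obtain ⟨lam, hlam0, hlamd⟩ := h1 hα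
      set G : Set (EuclideanSpace ℝ (Fin m)) :=
        {x | x ∈ A ∧ ‖f x - P x‖ ≤ lam * ‖x - a‖ ^ ((k : ℝ) + α)} with hGdef
      have haG : a ∈ A → a ∈ G := by
        intro ha
        refine ⟨ha, ?_⟩
        rw [hPa ha, sub_self, sub_self, norm_zero, norm_zero,
          Real.zero_rpow (by positivity : (k : ℝ) + α ≠ 0), mul_zero]
      refine ⟨fun x => if x ∈ G then f x else P x, ⟨P, hP, ?_, ?_, ?_⟩, ?_, ?_⟩
      · show (if a ∈ G then f a else P a) = P a
        by_cases ha : a ∈ A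
        · rw [if_pos (haG ha), hPa ha]
        · rw [if_neg (fun hG => ha hG.1)]
      · intro hα'; exact absurd hα' hα
      · intro _
        refine ⟨lam, Eventually.of_forall fun x => ?_⟩
        show ‖(if x ∈ G then f x else P x) - P x‖ ≤ _
        by_cases hxG : x ∈ G
        · rw [if_pos hxG]; exact hxG.2
        · rw [if_neg hxG, sub_self, norm_zero]
          exact mul_nonneg hlam0 (Real.rpow_nonneg (norm_nonneg _) _)
      · intro ha; exact (if_pos (haG ha)).symm
      · refine (hA.union hlamd).mono_eventually (Eventually.of_forall fun x hx => ?_)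
        by_cases hxA : x ∈ A
        · right
          have hxG : x ∉ G := fun hG => hx ⟨hxA, if_pos hG⟩
          rw [hGdef] at hxG
          simp only [mem_setOf_eq, not_and, not_le] at hxG
          exact ⟨hxA, hxG hxA⟩
        · exact Or.inl hxA
  · rintro ⟨g, ⟨P, hP, hgP, h0, h1⟩, hfg, hE⟩
    refine ⟨?_, P, hP, ?_, ?_, ?_⟩
    · exact hE.mono_eventually (Eventually.of_forall fun x hxA hmem => hxA hmem.1)
    · intro ha; exact ((hfg ha).trans hgP).symm
    · intro hα ε hε
      refine hE.mono_eventually ?_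
      filter_upwards [h0 hα ε hε] with x hxb hx hmem
      rw [hmem.2] at hxb
      exact absurd hx.2 (not_lt.mpr hxb)
    · intro hα
      obtain ⟨C, hev⟩ := h1 hα
      refine ⟨max C 0, le_max_right _ _, ?_⟩
      refine hE.mono_eventually ?_
      filter_upwards [hev] with x hxb hx hmem
      rw [hmem.2] at hxb
      refine absurd hx.2 (not_lt.mpr (hxb.trans ?_))
      exact mul_le_mul_of_nonneg_right (le_max_left _ _) (Real.rpow_nonneg (norm_nonneg _) _)
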